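/- Let 1 ≤ N < n, set ε = 1, and let i ∈ {N+1,…,n}. Then the quantity E_i(L^{n,−N,0})[q] + ½ (q_{n+N+1−i})_{xx} depends only on q_1,…,q_{n+N−i} and their x-derivatives: for any two smooth curves q, q̃ : ℝ → ℝ^n with q_l = q̃_l for all l = 1,…,n+N−i, one has E_i(L^{n,−N,0})[q] + ½ (q_{n+N+1−i})_{xx} = E_i(L^{n,−N,0})[q̃] + ½ (q̃_{n+N+1−i})_{xx} pointwise. In other words, the Euler–Lagrange equation E_i(L^{n,−N,0}) = 0 has the form −½ (q_{n+N+1−i})_{xx} + φ_{n+N+1−i−N}[q_1,…,q_{n+N−i}] = 0. -/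

import Mathlib

noncomputable section

/-- Benenti potentials `V_i^{(k)}` for `k ≥ 0`: `Vpos n q k i = V_i^{(k)}(q)` (`i` 1-based),
with `V_i^{(0)} = δ_{i n}` and `V_i^{(k+1)} = V_{i+1}^{(k)} - q_i V_1^{(k)}`, `V_{n+1}^{(k)} := 0`. -/
def Vpos (n : ℕ) (q : ℕ → ℝ) : ℕ → ℕ → ℝ
  | 0, i => if i = n then 1 else 0
  | k + 1, i => (if i = n then 0 else Vpos n q k (i + 1)) - q i * Vpos n q k 1

/-- Benenti potentials for negative superscripts: `Vneg n q j r = V_r^{(-j)}(q)`, via the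
backward recursion `V_r^{(k)} = V_{r-1}^{(k+1)} - (q_{r-1}/q_n) V_n^{(k+1)}`, with
`V_0 := 0` and `q_0 := 1`. -/
def Vneg (n : ℕ) (q : ℕ → ℝ) : ℕ → ℕ → ℝ
  | 0, r => if r = n then 1 else 0
  | j + 1, r =>
      (if r = 1 then 0 else Vneg n q j (r - 1)) -
        (if r = 1 then 1 else q (r - 1)) / q n * Vneg n q j n

/-- Benenti potential `V_i^{(k)}(q)` for `k : ℤ`, `i` 1-based. -/
def benenti (n : ℕ) (q : ℕ → ℝ) (k : ℤ) (i : ℕ) : ℝ :=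
  if 0 ≤ k then Vpos n q k.toNat i else Vneg n q (-k).toNat i

/-- Reindex a vector of `ℝ^n` as a 1-based `ℕ`-indexed family (zero outside `1..n`). -/
def extQ (n : ℕ) (Q : Fin n → ℝ) : ℕ → ℝ := fun a =>
  if h : 1 ≤ a ∧ a ≤ n then Q ⟨a - 1, by omega⟩ else 0

/-- The Stäckel Lagrangian `L^{n,m,k}(q,q_x) = ¼ ∑_{i,j} V_1^{(2n-m-i-j)}(q) q_{i,x} q_{j,x}
- (ε/4) V_1^{(k)}(q)` (indices 1-based). -/
def Lag (n : ℕ) (m k : ℤ) (ε : ℝ) (Q Qx : Fin n → ℝ) : ℝ :=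
  (1 / 4) * ∑ i : Fin n, ∑ j : Fin n,
      benenti n (extQ n Q) (2 * (n : ℤ) - m - (((i : ℕ) : ℤ) + 1) - (((j : ℕ) : ℤ) + 1)) 1 *
        Qx i * Qx j -
    ε / 4 * benenti n (extQ n Q) k 1

/-- Euler–Lagrange expression `E_i(L)[c](x) = (∂L/∂q_i)(c x, c_x x) - d/dx [(∂L/∂q_{i,x})(c x, c_x x)]`
along a curve `c : ℝ → ℝⁿ`. -/
def EL (n : ℕ) (L : (Fin n → ℝ) → (Fin n → ℝ) → ℝ) (c : ℝ → Fin n → ℝ) (i : Fin n)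
    (x : ℝ) : ℝ :=
  fderiv ℝ (fun Q => L Q (deriv c x)) (c x) (Pi.single i 1) -
    deriv (fun y => fderiv ℝ (fun V => L (c y) V) (deriv c y) (Pi.single i 1)) x
section Aux

variable {n : ℕ}

/-- `Pk n k j Q = V_j^{(k)}(extQ Q)` as a function on `ℝ^n`. -/
def Pk (n k j : ℕ) : (Fin n → ℝ) → ℝ := fun Q => Vpos n (extQ n Q) k j

lemma Vpos_low (q : ℕ → ℝ) : ∀ k, k < n → ∀ i, Vpos n q k i = if i + k = n then 1 else 0 := by
  intro k
  induction k with
  | zero => intro _ i; simp [Vpos]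
  | succ k ih =>
    intro hk i
    have h1 : Vpos n q k 1 = 0 := by
      rw [ih (by omega) 1]
      simp; omega
    rw [Vpos, h1, ih (by omega) (i + 1), mul_zero, sub_zero]
    by_cases hi : i = n
    · have h2 : ¬ (i + 1 + k = n) := by omega
      have h3 : ¬ (i + (k + 1) = n) := by omega
      simp [hi, h2, h3]
    · have h2 : (i + 1 + k = n) ↔ (i + (k + 1) = n) := by omega
      simp [hi, h2]

lemma Vpos_congr (q Qt : ℕ → ℝ) : ∀ k i, 1 ≤ i →
    (∀ l, 1 ≤ l → l + n ≤ k + i → q l = Qt l) → Vpos n q k i = Vpos n Qt k i := by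
  intro k
  induction k with
  | zero => intro i _ _; simp [Vpos]
  | succ k ih =>
    intro i hi hag
    rw [Vpos, Vpos]
    by_cases hkn : n ≤ k + 1
    · have hqi : q i = Qt i := hag i hi (by omega)
      have h1 : Vpos n q k 1 = Vpos n Qt k 1 :=
        ih 1 le_rfl (fun l hl hln => hag l hl (by omega))
      have h2 : Vpos n q k (i+1) = Vpos n Qt k (i+1) :=
        ih (i+1) (by omega) (fun l hl hln => hag l hl (by omega))
      rw [hqi, h1, h2]
    · have h1 : Vpos n q k 1 = 0 := by rw [Vpos_low q k (by omega) 1]; simp; omega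
      have h1' : Vpos n Qt k 1 = 0 := by rw [Vpos_low Qt k (by omega) 1]; simp; omega
      have h2 : Vpos n q k (i+1) = Vpos n Qt k (i+1) :=
        ih (i+1) (by omega) (fun l hl hln => hag l hl (by omega))
      rw [h1, h1', h2, mul_zero, mul_zero]

lemma Pk_congr {k j : ℕ} (hj : 1 ≤ j) {Q Qt : Fin n → ℝ}
    (h : ∀ l : Fin n, (l : ℕ) + 1 + n ≤ k + j → Q l = Qt l) : Pk n k j Q = Pk n k j Qt := by
  refine Vpos_congr _ _ k j hj (fun l hl hln => ?_)
  unfold extQ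
  by_cases hln' : 1 ≤ l ∧ l ≤ n
  · simp only [dif_pos hln']
    have := h ⟨l - 1, by omega⟩ (by simp; omega)
    simpa using this
  · simp [hln']

lemma Pk_low {k j : ℕ} (hk : k < n) (Q : Fin n → ℝ) :
    Pk n k j Q = if j + k = n then 1 else 0 := Vpos_low _ k hk j

lemma contDiff_extQ (j : ℕ) : ContDiff ℝ (⊤ : ℕ∞) (fun Q : Fin n → ℝ => extQ n Q j) := by
  unfold extQ
  by_cases h : 1 ≤ j ∧ j ≤ n
  · simp only [dif_pos h]
    exact (ContinuousLinearMap.proj (R := ℝ) (φ := fun _ : Fin n => ℝ) ⟨j - 1, by omega⟩).contDiff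
  · simp only [dif_neg h]; exact contDiff_const

lemma contDiff_Pk : ∀ k j, ContDiff ℝ (⊤ : ℕ∞) (Pk n k j) := by
  intro k
  induction k with
  | zero =>
    intro j
    have : Pk n 0 j = fun _ => if j = n then (1:ℝ) else 0 := rfl
    rw [this]; exact contDiff_const
  | succ k ih =>
    intro j
    have : Pk n (k+1) j = fun Q =>
        (if j = n then 0 else Pk n k (j+1) Q) - extQ n Q j * Pk n k 1 Q := rfl
    rw [this]
    by_cases hj : j = n
    · simp only [if_pos hj]
      exact contDiff_const.sub ((contDiff_extQ j).mul (ih 1))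
    · simp only [if_neg hj]
      exact (ih (j+1)).sub ((contDiff_extQ j).mul (ih 1))

lemma differentiable_Pk (k j : ℕ) : Differentiable ℝ (Pk n k j) :=
  (contDiff_Pk k j).differentiable (by simp)

lemma fderiv_extQ (ι : Fin n) (j : ℕ) (Q : Fin n → ℝ) :
    fderiv ℝ (fun Q : Fin n → ℝ => extQ n Q j) Q (Pi.single ι 1) =
      if j = (ι : ℕ) + 1 then 1 else 0 := by
  unfold extQ
  by_cases h : 1 ≤ j ∧ j ≤ n
  · simp only [dif_pos h]
    rw [(hasFDerivAt_apply (𝕜 := ℝ) (⟨j - 1, by omega⟩ : Fin n) Q).fderiv]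
    simp only [ContinuousLinearMap.proj_apply, Pi.single_apply]
    by_cases hj : (⟨j - 1, by omega⟩ : Fin n) = ι
    · have : j = (ι : ℕ) + 1 := by
        have := congrArg (Fin.val) hj; simp at this; omega
      simp [hj, this]
    · have : ¬ j = (ι : ℕ) + 1 := by
        intro hc; apply hj; apply Fin.ext; simp; omega
      simp [hj, this]
  · simp only [dif_neg h]
    rw [fderiv_fun_const]
    have : ¬ j = (ι : ℕ) + 1 := by intro hc; apply h; constructor <;> omega
    simp [this]

end Aux
section Aux2

variable {n : ℕ}

lemma fderiv_Pk_succ (k j : ℕ) (ι : Fin n) (Q : Fin n → ℝ) :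
    fderiv ℝ (Pk n (k+1) j) Q (Pi.single ι 1) =
      (if j = n then 0 else fderiv ℝ (Pk n k (j+1)) Q (Pi.single ι 1)) -
        ((if j = (ι : ℕ) + 1 then 1 else 0) * Pk n k 1 Q +
          extQ n Q j * fderiv ℝ (Pk n k 1) Q (Pi.single ι 1)) := by
  have hrec : Pk n (k+1) j = fun Q =>
      (if j = n then 0 else Pk n k (j+1) Q) - extQ n Q j * Pk n k 1 Q := rfl
  have hde : DifferentiableAt ℝ (fun Q : Fin n → ℝ => extQ n Q j) Q :=
    ((contDiff_extQ j).differentiable (by simp)).differentiableAt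
  have hd1 : DifferentiableAt ℝ (Pk n k 1) Q := (differentiable_Pk k 1).differentiableAt
  have hmul := fderiv_fun_mul (𝕜 := ℝ) hde hd1
  by_cases hj : j = n
  · simp only [hrec, if_pos hj]
    rw [show (fun Q : Fin n → ℝ => (0:ℝ) - extQ n Q j * Pk n k 1 Q)
        = fun Q : Fin n → ℝ => -(extQ n Q j * Pk n k 1 Q) by funext; ring]
    rw [fderiv_fun_neg, hmul]
    simp only [ContinuousLinearMap.neg_apply, ContinuousLinearMap.add_apply,
      ContinuousLinearMap.smul_apply, smul_eq_mul, fderiv_extQ]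
    ring
  · simp only [hrec, if_neg hj]
    rw [fderiv_fun_sub (differentiable_Pk k (j+1)).differentiableAt
      (hde.fun_mul hd1), hmul]
    simp only [ContinuousLinearMap.sub_apply, ContinuousLinearMap.add_apply,
      ContinuousLinearMap.smul_apply, smul_eq_mul, fderiv_extQ]
    ring

lemma fderiv_Pk_vanish : ∀ k j (ι : Fin n) (Q : Fin n → ℝ), k + j < n + ((ι : ℕ) + 1) →
    fderiv ℝ (Pk n k j) Q (Pi.single ι 1) = 0 := by
  intro k
  induction k with
  | zero =>
    intro j ι Q _
    have : Pk n 0 j = fun _ => if j = n then (1:ℝ) else 0 := rfl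
    rw [this, fderiv_fun_const]
    simp
  | succ k ih =>
    intro j ι Q hlt
    rw [fderiv_Pk_succ]
    have h1 : (if j = n then (0:ℝ) else fderiv ℝ (Pk n k (j+1)) Q (Pi.single ι 1)) = 0 := by
      by_cases hj : j = n
      · simp [hj]
      · simp only [if_neg hj]; exact ih (j+1) ι Q (by omega)
    have h2 : (if j = (ι : ℕ) + 1 then (1:ℝ) else 0) * Pk n k 1 Q = 0 := by
      by_cases hj : j = (ι : ℕ) + 1
      · have hk : k < n := by omega
        rw [Pk_low hk]
        have : ¬ (1 + k = n) := by omega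
        simp [this]
      · simp [hj]
    have h3 : fderiv ℝ (Pk n k 1) Q (Pi.single ι 1) = 0 := ih 1 ι Q (by omega)
    rw [h1, h2, h3, mul_zero]
    ring

lemma fderiv_Pk_congr : ∀ k j (ι : Fin n) (Q Qt : Fin n → ℝ),
    (∀ l : Fin n, (l : ℕ) + 1 + n + ((ι : ℕ) + 1) ≤ k + j → Q l = Qt l) →
    fderiv ℝ (Pk n k j) Q (Pi.single ι 1) = fderiv ℝ (Pk n k j) Qt (Pi.single ι 1) := by
  intro k
  induction k with
  | zero =>
    intro j ι Q Qt _
    have : Pk n 0 j = fun _ => if j = n then (1:ℝ) else 0 := rfl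
    rw [this, fderiv_fun_const]
    rfl
  | succ k ih =>
    intro j ι Q Qt hag
    rw [fderiv_Pk_succ, fderiv_Pk_succ]
    have h1 : (if j = n then (0:ℝ) else fderiv ℝ (Pk n k (j+1)) Q (Pi.single ι 1)) =
        (if j = n then (0:ℝ) else fderiv ℝ (Pk n k (j+1)) Qt (Pi.single ι 1)) := by
      by_cases hj : j = n
      · simp [hj]
      · simp only [if_neg hj]
        exact ih (j+1) ι Q Qt (fun l hl => hag l (by omega))
    have h2 : (if j = (ι : ℕ) + 1 then (1:ℝ) else 0) * Pk n k 1 Q =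
        (if j = (ι : ℕ) + 1 then (1:ℝ) else 0) * Pk n k 1 Qt := by
      by_cases hj : j = (ι : ℕ) + 1
      · rw [Pk_congr le_rfl (fun l hl => hag l (by omega))]
      · simp [hj]
    have h3 : extQ n Q j * fderiv ℝ (Pk n k 1) Q (Pi.single ι 1) =
        extQ n Qt j * fderiv ℝ (Pk n k 1) Qt (Pi.single ι 1) := by
      by_cases hk : k + 1 < n + ((ι : ℕ) + 1)
      · rw [fderiv_Pk_vanish k 1 ι Q hk, fderiv_Pk_vanish k 1 ι Qt hk, mul_zero, mul_zero]
      · have hQ : extQ n Q j = extQ n Qt j := by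
          unfold extQ
          by_cases hln' : 1 ≤ j ∧ j ≤ n
          · simp only [dif_pos hln']
            exact hag ⟨j - 1, by omega⟩ (by simp; omega)
          · simp [hln']
        rw [hQ, ih 1 ι Q Qt (fun l hl => hag l (by omega))]
    rw [h1, h2, h3]

end Aux2
section Aux3

variable {n N : ℕ}

/-- The (natural-number) exponent `2n + N - (a+1) - (b+1)` in the kinetic term. -/
def kap (n N a b : ℕ) : ℕ := 2*n + N - (a+1) - (b+1)

lemma benenti_kin (q : ℕ → ℝ) (a b : Fin n) :
    benenti n q (2 * (n : ℤ) - (-(N : ℤ)) - (((a : ℕ) : ℤ) + 1) - (((b : ℕ) : ℤ) + 1)) 1 =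
      Vpos n q (kap n N (a : ℕ) (b : ℕ)) 1 := by
  have ha := a.isLt; have hb := b.isLt
  have h0 : 0 ≤ 2 * (n : ℤ) - (-(N : ℤ)) - (((a : ℕ) : ℤ) + 1) - (((b : ℕ) : ℤ) + 1) := by omega
  rw [benenti, if_pos h0]
  congr 1
  unfold kap
  omega

lemma Lag_eq (hn2 : 2 ≤ n) (Q V : Fin n → ℝ) :
    Lag n (-(N : ℤ)) 0 1 Q V =
      (1/4) * ∑ a : Fin n, ∑ b : Fin n,
        Pk n (kap n N (a : ℕ) (b : ℕ)) 1 Q * V a * V b := by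
  rw [Lag]
  have hpot : benenti n (extQ n Q) 0 1 = 0 := by
    rw [benenti, if_pos le_rfl]
    show Vpos n (extQ n Q) 0 1 = 0
    rw [Vpos]
    have : (1 : ℕ) ≠ n := by omega
    simp [this]
  rw [hpot]
  simp only [benenti_kin]
  show _ - (1:ℝ)/4 * 0 = _
  rw [mul_zero, sub_zero]
  rfl

lemma diff_kin_Q (V : Fin n → ℝ) (P : Fin n → ℝ) :
    ∀ (a b : Fin n), DifferentiableAt ℝ
      (fun Q : Fin n → ℝ => Pk n (kap n N (a : ℕ) (b : ℕ)) 1 Q * V a * V b) P := by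
  intro a b
  exact (((differentiable_Pk _ 1).differentiableAt).mul_const (V a)).mul_const (V b)

lemma fderiv_Lag_Q (hn2 : 2 ≤ n) (V P : Fin n → ℝ) (ι : Fin n) :
    fderiv ℝ (fun Q => Lag n (-(N : ℤ)) 0 1 Q V) P (Pi.single ι 1) =
      (1/4) * ∑ a : Fin n, ∑ b : Fin n,
        fderiv ℝ (Pk n (kap n N (a : ℕ) (b : ℕ)) 1) P (Pi.single ι 1) * (V a * V b) := by
  have h1 : (fun Q => Lag n (-(N : ℤ)) 0 1 Q V) = fun Q =>
      (1/4) * ∑ a : Fin n, ∑ b : Fin n,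
        Pk n (kap n N (a : ℕ) (b : ℕ)) 1 Q * (V a * V b) := by
    funext Q
    rw [Lag_eq hn2]
    congr 1
    refine Finset.sum_congr rfl (fun a _ => Finset.sum_congr rfl (fun b _ => ?_))
    ring
  rw [h1]
  have hterm : ∀ (a b : Fin n), DifferentiableAt ℝ
      (fun Q : Fin n → ℝ => Pk n (kap n N (a : ℕ) (b : ℕ)) 1 Q * (V a * V b)) P :=
    fun a b => ((differentiable_Pk _ 1).differentiableAt).mul_const _
  have hinner : ∀ a : Fin n, DifferentiableAt ℝ
      (fun Q : Fin n → ℝ => ∑ b : Fin n,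
        Pk n (kap n N (a : ℕ) (b : ℕ)) 1 Q * (V a * V b)) P :=
    fun a => DifferentiableAt.fun_sum (fun b _ => hterm a b)
  have hsum : DifferentiableAt ℝ (fun Q : Fin n → ℝ => ∑ a : Fin n, ∑ b : Fin n,
      Pk n (kap n N (a : ℕ) (b : ℕ)) 1 Q * (V a * V b)) P :=
    DifferentiableAt.fun_sum (fun a _ => hinner a)
  rw [fderiv_const_mul hsum]
  simp only [ContinuousLinearMap.smul_apply, smul_eq_mul]
  congr 1
  rw [fderiv_fun_sum (fun a _ => hinner a)]
  simp only [ContinuousLinearMap.sum_apply]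
  refine Finset.sum_congr rfl (fun a _ => ?_)
  rw [fderiv_fun_sum (fun b _ => hterm a b)]
  simp only [ContinuousLinearMap.sum_apply]
  refine Finset.sum_congr rfl (fun b _ => ?_)
  rw [fderiv_mul_const ((differentiable_Pk _ 1).differentiableAt)]
  simp only [ContinuousLinearMap.smul_apply, smul_eq_mul]
  ring

lemma kap_comm (a b : ℕ) : kap n N a b = kap n N b a := by unfold kap; omega

lemma fderiv_Lag_V (hn2 : 2 ≤ n) (P V₀ : Fin n → ℝ) (ι : Fin n) :
    fderiv ℝ (fun V => Lag n (-(N : ℤ)) 0 1 P V) V₀ (Pi.single ι 1) =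
      (1/2) * ∑ a : Fin n, Pk n (kap n N (a : ℕ) ((ι : ℕ))) 1 P * V₀ a := by
  have h1 : (fun V => Lag n (-(N : ℤ)) 0 1 P V) = fun V : Fin n → ℝ =>
      (1/4) * ∑ a : Fin n, ∑ b : Fin n,
        Pk n (kap n N (a : ℕ) (b : ℕ)) 1 P * V a * V b := by
    funext V; exact Lag_eq hn2 P V
  rw [h1]
  have heval : ∀ (c : Fin n), DifferentiableAt ℝ (fun V : Fin n → ℝ => V c) V₀ :=
    fun c => (differentiable_apply c).differentiableAt
  have hterm : ∀ (a b : Fin n), DifferentiableAt ℝ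
      (fun V : Fin n → ℝ => Pk n (kap n N (a : ℕ) (b : ℕ)) 1 P * V a * V b) V₀ :=
    fun a b => (((heval a).const_mul _).mul (heval b))
  have hinner : ∀ a : Fin n, DifferentiableAt ℝ
      (fun V : Fin n → ℝ => ∑ b : Fin n,
        Pk n (kap n N (a : ℕ) (b : ℕ)) 1 P * V a * V b) V₀ :=
    fun a => DifferentiableAt.fun_sum (fun b _ => hterm a b)
  have hsum : DifferentiableAt ℝ (fun V : Fin n → ℝ => ∑ a : Fin n, ∑ b : Fin n,
      Pk n (kap n N (a : ℕ) (b : ℕ)) 1 P * V a * V b) V₀ :=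
    DifferentiableAt.fun_sum (fun a _ => hinner a)
  rw [fderiv_const_mul hsum]
  simp only [ContinuousLinearMap.smul_apply, smul_eq_mul]
  have hval : (fderiv ℝ (fun V : Fin n → ℝ => ∑ a : Fin n, ∑ b : Fin n,
      Pk n (kap n N (a : ℕ) (b : ℕ)) 1 P * V a * V b) V₀) (Pi.single ι 1) =
      ∑ a : Fin n, ∑ b : Fin n,
        (Pk n (kap n N (a : ℕ) (b : ℕ)) 1 P * V₀ a * (if b = ι then (1:ℝ) else 0)
          + V₀ b * (Pk n (kap n N (a : ℕ) (b : ℕ)) 1 P * (if a = ι then (1:ℝ) else 0))) := by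
    rw [fderiv_fun_sum (fun a _ => hinner a)]
    simp only [ContinuousLinearMap.sum_apply]
    refine Finset.sum_congr rfl (fun a _ => ?_)
    rw [fderiv_fun_sum (fun b _ => hterm a b)]
    simp only [ContinuousLinearMap.sum_apply]
    refine Finset.sum_congr rfl (fun b _ => ?_)
    rw [fderiv_fun_mul ((heval a).const_mul _) (heval b)]
    simp only [ContinuousLinearMap.add_apply, ContinuousLinearMap.smul_apply, smul_eq_mul]
    rw [fderiv_const_mul (heval a)]
    rw [(hasFDerivAt_apply (𝕜 := ℝ) a V₀).fderiv, (hasFDerivAt_apply (𝕜 := ℝ) b V₀).fderiv]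
    simp only [ContinuousLinearMap.smul_apply, smul_eq_mul, ContinuousLinearMap.proj_apply,
      Pi.single_apply]
    try ring
  rw [hval]
  simp only [Finset.sum_add_distrib]
  have hA : ∑ a : Fin n, ∑ b : Fin n,
      Pk n (kap n N (a : ℕ) (b : ℕ)) 1 P * V₀ a * (if b = ι then (1:ℝ) else 0) =
      ∑ a : Fin n, Pk n (kap n N (a : ℕ) ((ι : ℕ))) 1 P * V₀ a := by
    refine Finset.sum_congr rfl (fun a _ => ?_)
    simp [mul_ite]
  have hB : ∑ a : Fin n, ∑ b : Fin n,
      V₀ b * (Pk n (kap n N (a : ℕ) (b : ℕ)) 1 P * (if a = ι then (1:ℝ) else 0)) =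
      ∑ a : Fin n, Pk n (kap n N (a : ℕ) ((ι : ℕ))) 1 P * V₀ a := by
    rw [Finset.sum_comm]
    refine Finset.sum_congr rfl (fun b _ => ?_)
    have : ∀ a : Fin n, V₀ b * (Pk n (kap n N (a : ℕ) (b : ℕ)) 1 P * (if a = ι then (1:ℝ) else 0))
        = if a = ι then V₀ b * Pk n (kap n N (a : ℕ) (b : ℕ)) 1 P else 0 := by
      intro a; split <;> ring
    simp only [this, Finset.sum_ite_eq', Finset.mem_univ, if_true]
    rw [kap_comm]
    ring
  rw [hA, hB]
  ring

end Aux3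
section Curves

variable {n : ℕ}

lemma curve_differentiable {c : ℝ → Fin n → ℝ} (hc : ContDiff ℝ (⊤ : ℕ∞) c) :
    Differentiable ℝ c := hc.differentiable (by simp)

lemma deriv_apply_comm {c : ℝ → Fin n → ℝ} (hc : ContDiff ℝ (⊤ : ℕ∞) c) (l : Fin n) (y : ℝ) :
    deriv c y l = deriv (fun z => c z l) y :=
  (hasDerivAt_pi.1 ((curve_differentiable hc y).hasDerivAt) l).deriv.symm

lemma contDiff_curve_apply {c : ℝ → Fin n → ℝ} (hc : ContDiff ℝ (⊤ : ℕ∞) c) (l : Fin n) :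
    ContDiff ℝ (⊤ : ℕ∞) (fun z => c z l) :=
  (ContinuousLinearMap.proj (R := ℝ) (φ := fun _ : Fin n => ℝ) l).contDiff.comp hc

lemma differentiable_deriv_apply {c : ℝ → Fin n → ℝ} (hc : ContDiff ℝ (⊤ : ℕ∞) c) (l : Fin n) :
    Differentiable ℝ (fun y => deriv c y l) := by
  have h1 : (fun y => deriv c y l) = deriv (fun z => c z l) :=
    funext (deriv_apply_comm hc l)
  rw [h1]
  have hcl := contDiff_curve_apply hc l
  exact ((contDiff_infty_iff_deriv.1 (by exact_mod_cast hcl)).2).differentiable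
    (by simp)

lemma differentiable_Pk_comp {c : ℝ → Fin n → ℝ} (hc : ContDiff ℝ (⊤ : ℕ∞) c) (k : ℕ) :
    Differentiable ℝ (fun y => Pk n k 1 (c y)) :=
  ((contDiff_Pk k 1).comp hc).differentiable (by simp)

end Curves
theorem euler_lagrange_depends_on_lower_components (n N : ℕ) (hN : 1 ≤ N) (hNn : N < n)
    (i : ℕ) (hi1 : N + 1 ≤ i) (hi2 : i ≤ n)
    (q q' : ℝ → Fin n → ℝ) (hq : ContDiff ℝ (⊤ : ℕ∞) q) (hq' : ContDiff ℝ (⊤ : ℕ∞) q')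
    (hagree : ∀ l : ℕ, (hl1 : 1 ≤ l) → (hl2 : l ≤ n + N - i) → ∀ x : ℝ,
      q x ⟨l - 1, by omega⟩ = q' x ⟨l - 1, by omega⟩) :
    ∀ x : ℝ,
      EL n (Lag n (-(N : ℤ)) 0 1) q ⟨i - 1, by omega⟩ x +
          (1 / 2) * deriv (deriv (fun y => q y ⟨n + N - i, by omega⟩)) x =
        EL n (Lag n (-(N : ℤ)) 0 1) q' ⟨i - 1, by omega⟩ x +
          (1 / 2) * deriv (deriv (fun y => q' y ⟨n + N - i, by omega⟩)) x := by
  intro x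
  have hn2 : 2 ≤ n := by omega
  have hιlt : i - 1 < n := by omega
  have hj₀lt : n + N - i < n := by omega
  set ι : Fin n := ⟨i - 1, hιlt⟩ with hιdef
  set j₀ : Fin n := ⟨n + N - i, hj₀lt⟩ with hj₀def
  have hι : (ι : ℕ) + 1 = i := by simp [hιdef]; omega
  have hj₀ : (j₀ : ℕ) = n + N - i := by simp [hj₀def]
  -- pointwise agreement of low components and their derivatives
  have hpt : ∀ l : Fin n, (l : ℕ) + 1 + i ≤ n + N → ∀ y, q y l = q' y l := by
    intro l hl y
    have h := hagree ((l : ℕ) + 1) (by omega) (by omega) y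
    simpa using h
  have hderagree : ∀ l : Fin n, (l : ℕ) + 1 + i ≤ n + N → ∀ y,
      deriv q y l = deriv q' y l := by
    intro l hl y
    rw [deriv_apply_comm hq l y, deriv_apply_comm hq' l y]
    congr 1
    funext z
    exact hpt l hl z
  -- Step 1 : equality of the ∂L/∂q_i terms
  have hT1 : fderiv ℝ (fun Q => Lag n (-(N : ℤ)) 0 1 Q (deriv q x)) (q x) (Pi.single ι 1) =
      fderiv ℝ (fun Q => Lag n (-(N : ℤ)) 0 1 Q (deriv q' x)) (q' x) (Pi.single ι 1) := by
    rw [fderiv_Lag_Q hn2, fderiv_Lag_Q hn2]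
    congr 1
    refine Finset.sum_congr rfl fun a _ => Finset.sum_congr rfl fun b _ => ?_
    have ha := a.isLt; have hb := b.isLt
    have hk : kap n N (a : ℕ) (b : ℕ) = 2*n + N - ((a : ℕ)+1) - ((b : ℕ)+1) := rfl
    by_cases hab : (a : ℕ) + 1 + ((b : ℕ) + 1) + i ≤ n + N + 1
    · have hfd : fderiv ℝ (Pk n (kap n N (a : ℕ) (b : ℕ)) 1) (q x) (Pi.single ι 1) =
          fderiv ℝ (Pk n (kap n N (a : ℕ) (b : ℕ)) 1) (q' x) (Pi.single ι 1) := by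
        refine fderiv_Pk_congr _ 1 ι (q x) (q' x) (fun l hl => ?_)
        rw [hk] at hl
        exact hpt l (by omega) x
      rw [hfd, hderagree a (by omega) x, hderagree b (by omega) x]
    · rw [fderiv_Pk_vanish _ 1 ι (q x) (by rw [hk]; omega),
        fderiv_Pk_vanish _ 1 ι (q' x) (by rw [hk]; omega)]
      simp
  -- Step 2 : decomposition of the momentum term
  have hGsplit : ∀ (c : ℝ → Fin n → ℝ),
      (fun y => fderiv ℝ (fun V => Lag n (-(N : ℤ)) 0 1 (c y) V) (deriv c y) (Pi.single ι 1)) =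
      fun y => ((1/2 : ℝ) * ∑ a : Fin n, (if (a : ℕ) + 1 + i ≤ n + N then
          Pk n (kap n N (a : ℕ) ((ι : ℕ))) 1 (c y) * deriv c y a else 0)) +
        (1/2 : ℝ) * deriv c y j₀ := by
    intro c
    funext y
    rw [fderiv_Lag_V hn2 (c y) (deriv c y) ι]
    have hterm : ∀ a : Fin n, Pk n (kap n N (a : ℕ) ((ι : ℕ))) 1 (c y) * deriv c y a =
        (if (a : ℕ) + 1 + i ≤ n + N then
          Pk n (kap n N (a : ℕ) ((ι : ℕ))) 1 (c y) * deriv c y a else 0)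
          + (if a = j₀ then deriv c y a else 0) := by
      intro a
      have ha := a.isLt
      have hk : kap n N (a : ℕ) ((ι : ℕ)) = 2*n + N - ((a : ℕ)+1) - ((ι : ℕ)+1) := rfl
      by_cases h1 : (a : ℕ) + 1 + i ≤ n + N
      · have hne : a ≠ j₀ := by
          intro hc
          have := congrArg Fin.val hc
          rw [hj₀] at this
          omega
        simp [h1, hne]
      · by_cases h2 : (a : ℕ) + 1 + i = n + N + 1
        · have heq : a = j₀ := by
            apply Fin.ext
            rw [hj₀]
            omega
          have hkv : kap n N (a : ℕ) ((ι : ℕ)) = n - 1 := by rw [hk]; omega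
          rw [hkv, Pk_low (by omega)]
          have h3 : 1 + (n - 1) = n := by omega
          have h1' : ¬ ((j₀ : ℕ) + 1 + i ≤ n + N) := by rw [hj₀]; omega
          rw [heq]
          simp [h3, h1']
        · have hne : a ≠ j₀ := by
            intro hc
            have := congrArg Fin.val hc
            rw [hj₀] at this
            omega
          have hkv : kap n N (a : ℕ) ((ι : ℕ)) + 1 < n := by rw [hk]; omega
          rw [Pk_low (by omega)]
          have h3 : ¬ (1 + kap n N (a : ℕ) ((ι : ℕ)) = n) := by omega
          simp [h3, h1, hne]
    calc (1/2 : ℝ) * ∑ a : Fin n, Pk n (kap n N (a : ℕ) ((ι : ℕ))) 1 (c y) * deriv c y a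
        = (1/2 : ℝ) * ∑ a : Fin n,
            ((if (a : ℕ) + 1 + i ≤ n + N then
              Pk n (kap n N (a : ℕ) ((ι : ℕ))) 1 (c y) * deriv c y a else 0)
              + (if a = j₀ then deriv c y a else 0)) := by
          rw [Finset.sum_congr rfl (fun a _ => hterm a)]
      _ = (1/2 : ℝ) * ((∑ a : Fin n, (if (a : ℕ) + 1 + i ≤ n + N then
              Pk n (kap n N (a : ℕ) ((ι : ℕ))) 1 (c y) * deriv c y a else 0))
              + ∑ a : Fin n, (if a = j₀ then deriv c y a else 0)) := by
          rw [Finset.sum_add_distrib]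
      _ = _ := by
          rw [Finset.sum_ite_eq' Finset.univ j₀ (fun a => deriv c y a)]
          simp only [Finset.mem_univ, if_true]
          ring
  -- the low part agrees for q and q'
  have hHeq : (fun y => (1/2 : ℝ) * ∑ a : Fin n, (if (a : ℕ) + 1 + i ≤ n + N then
        Pk n (kap n N (a : ℕ) ((ι : ℕ))) 1 (q y) * deriv q y a else 0)) =
      fun y => (1/2 : ℝ) * ∑ a : Fin n, (if (a : ℕ) + 1 + i ≤ n + N then
        Pk n (kap n N (a : ℕ) ((ι : ℕ))) 1 (q' y) * deriv q' y a else 0) := by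
    funext y
    congr 1
    refine Finset.sum_congr rfl fun a _ => ?_
    have ha := a.isLt
    have hk : kap n N (a : ℕ) ((ι : ℕ)) = 2*n + N - ((a : ℕ)+1) - ((ι : ℕ)+1) := rfl
    by_cases h1 : (a : ℕ) + 1 + i ≤ n + N
    · rw [if_pos h1, if_pos h1]
      have hP : Pk n (kap n N (a : ℕ) ((ι : ℕ))) 1 (q y) =
          Pk n (kap n N (a : ℕ) ((ι : ℕ))) 1 (q' y) := by
        refine Pk_congr le_rfl (fun l hl => ?_)
        rw [hk] at hl
        exact hpt l (by omega) y
      rw [hP, hderagree a h1 y]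
    · rw [if_neg h1, if_neg h1]
  -- differentiability facts
  have hdG' : Differentiable ℝ
      (fun y => fderiv ℝ (fun V => Lag n (-(N : ℤ)) 0 1 (q' y) V) (deriv q' y) (Pi.single ι 1)) := by
    rw [hGsplit q']
    apply Differentiable.add
    · apply Differentiable.const_mul
      apply Differentiable.fun_sum
      intro a _
      by_cases h1 : (a : ℕ) + 1 + i ≤ n + N
      · simp only [if_pos h1]
        exact (differentiable_Pk_comp hq' _).mul (differentiable_deriv_apply hq' a)
      · simp only [if_neg h1]
        exact differentiable_const 0
    · exact (differentiable_deriv_apply hq' j₀).const_mul _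
  have hdRq : Differentiable ℝ (fun y => (1/2 : ℝ) * deriv q y j₀) :=
    (differentiable_deriv_apply hq j₀).const_mul _
  have hdRq' : Differentiable ℝ (fun y => (1/2 : ℝ) * deriv q' y j₀) :=
    (differentiable_deriv_apply hq' j₀).const_mul _
  -- rewrite G q in terms of G q' and the remainder terms
  have hGG : (fun y => fderiv ℝ (fun V => Lag n (-(N : ℤ)) 0 1 (q y) V) (deriv q y) (Pi.single ι 1)) =
      fun y => (fderiv ℝ (fun V => Lag n (-(N : ℤ)) 0 1 (q' y) V) (deriv q' y) (Pi.single ι 1)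
        - (1/2 : ℝ) * deriv q' y j₀) + (1/2 : ℝ) * deriv q y j₀ := by
    funext y
    have e1 := congrFun (hGsplit q) y
    have e2 := congrFun (hGsplit q') y
    have e3 := congrFun hHeq y
    rw [e1, e2, e3]
    ring
  have hderivG : deriv (fun y => fderiv ℝ (fun V => Lag n (-(N : ℤ)) 0 1 (q y) V)
        (deriv q y) (Pi.single ι 1)) x =
      deriv (fun y => fderiv ℝ (fun V => Lag n (-(N : ℤ)) 0 1 (q' y) V)
        (deriv q' y) (Pi.single ι 1)) x
      - deriv (fun y => (1/2 : ℝ) * deriv q' y j₀) x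
      + deriv (fun y => (1/2 : ℝ) * deriv q y j₀) x := by
    rw [hGG, deriv_fun_add ((hdG' x).fun_sub (hdRq' x)) (hdRq x), deriv_fun_sub (hdG' x) (hdRq' x)]
  -- identify the remainder derivative with the second derivative of the top component
  have hD2 : ∀ (c : ℝ → Fin n → ℝ), ContDiff ℝ (⊤ : ℕ∞) c →
      deriv (fun y => (1/2 : ℝ) * deriv c y j₀) x =
        (1/2 : ℝ) * deriv (deriv (fun y => c y j₀)) x := by
    intro c hc
    have h1 : (fun y => (1/2 : ℝ) * deriv c y j₀) =
        fun y => (1/2 : ℝ) * deriv (fun z => c z j₀) y := by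
      funext y
      rw [deriv_apply_comm hc j₀ y]
    rw [h1, deriv_const_mul _ (by
      have := differentiable_deriv_apply hc j₀
      have h2 : (fun y => deriv c y j₀) = deriv (fun z => c z j₀) :=
        funext (deriv_apply_comm hc j₀)
      rw [h2] at this
      exact this x)]
  -- assemble
  show EL n (Lag n (-(N : ℤ)) 0 1) q ι x +
      (1 / 2) * deriv (deriv (fun y => q y j₀)) x =
    EL n (Lag n (-(N : ℤ)) 0 1) q' ι x +
      (1 / 2) * deriv (deriv (fun y => q' y j₀)) x
  rw [EL, EL]
  rw [hT1, hderivG, hD2 q hq, hD2 q' hq']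
  ring
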